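/- Define c_d = Γ(1 + d/2)^{2/d}/(1 + d/2) for positive integers d. Then the sequence (c_d)_{d≥1} is nonincreasing in d and converges to 1/e as d → ∞; in particular, c_d ≥ 1/e for every d ≥ 1. -/

import Mathlib

open Real Filter Finset

section RenyiAux



/-- The sharp constant `c_d = Γ(1+d/2)^{2/d}/(1+d/2)` of the `d`-dimensional ∞-Rényi
entropy power inequality. -/
noncomputable def cRenyi (d : ℕ) : ℝ :=
  (Real.Gamma (1 + (d : ℝ) / 2)) ^ ((2 : ℝ) / (d : ℝ)) / (1 + (d : ℝ) / 2)


/-- helper: derivative of `log (c + x)` -/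
lemma hasDerivAt_log_const_add (c x : ℝ) (h : c + x ≠ 0) :
    HasDerivAt (fun y : ℝ => Real.log (c + y)) (1 / (c + x)) x := by
  simpa using ((hasDerivAt_id x).const_add c).log h

/-- helper: derivative of `x / (a + x)` -/
lemma hasDerivAt_div_const_add (a x : ℝ) (h : a + x ≠ 0) :
    HasDerivAt (fun y : ℝ => y / (a + y)) (a / (a + x) ^ 2) x := by
  have := (hasDerivAt_id x).fun_div ((hasDerivAt_id x).const_add a) h
  refine this.congr_deriv ?_
  simp only [id]
  field_simp
  ring

/-- Claim B : `x - (1/2) log (1+2x) ≤ x^2/(1+x)` for `x ≥ 0`. -/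
lemma claimB {x : ℝ} (hx : 0 ≤ x) :
    x - (1/2) * Real.log (1 + 2*x) ≤ x^2 / (1+x) := by
  set f : ℝ → ℝ := fun y => y^2/(1+y) - y + (1/2) * Real.log (1+2*y) with hf
  have key : MonotoneOn f (Set.Ici (0:ℝ)) := by
    have hderiv : ∀ y ∈ Set.Ici (0:ℝ), HasDerivAt f
        ((2*y*(1+y) - y^2)/(1+y)^2 - 1 + (1/2) * (2/(1+2*y))) y := by
      intro y hy
      have hy0 : (0:ℝ) ≤ y := hy
      have h1 : (1:ℝ) + y ≠ 0 := by positivity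
      have h2 : (1:ℝ) + 2*y ≠ 0 := by positivity
      have d1 : HasDerivAt (fun y : ℝ => y^2/(1+y)) ((2*y*(1+y) - y^2)/(1+y)^2) y := by
        have := ((hasDerivAt_pow 2 y)).fun_div ((hasDerivAt_id y).const_add 1) h1
        refine this.congr_deriv ?_
        simp only [id]
        ring
      have d2 : HasDerivAt (fun y : ℝ => Real.log (1+2*y)) (2/(1+2*y)) y := by
        have := (((hasDerivAt_id y).const_mul 2).const_add 1).log h2
        simpa [mul_comm] using this
      exact (d1.sub (hasDerivAt_id y)).add (d2.const_mul (1/2))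
    apply monotoneOn_of_deriv_nonneg (convex_Ici 0)
    · exact fun y hy => (hderiv y hy).continuousAt.continuousWithinAt
    · intro y hy
      rw [interior_Ici] at hy
      exact (hderiv y (Set.mem_Ici.mpr (le_of_lt hy))).differentiableAt.differentiableWithinAt
    · intro y hy
      rw [interior_Ici] at hy
      have hy0 : (0:ℝ) < y := hy
      rw [(hderiv y hy0.le).deriv]
      have h1 : (0:ℝ) < (1+y)^2 := by positivity
      have h2 : (0:ℝ) < 1 + 2*y := by positivity
      have : (2*y*(1+y) - y^2)/(1+y)^2 - 1 + (1/2) * (2/(1+2*y))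
          = y^2 / ((1+y)^2 * (1+2*y)) := by
        field_simp
        ring
      rw [this]
      positivity
  have h0 : f 0 = 0 := by simp [hf]
  have := key (Set.self_mem_Ici) (Set.mem_Ici.mpr hx) hx
  rw [h0] at this
  simp only [hf] at this
  linarith


/-- Claim A: the per-term telescoping bound. For `a ≥ 1`, `x ≥ 0`:
`log((a+x)/a) - x/(a+x) ≤ (a+1/2)·log((a+1/2+x)/(a+1/2)) - (a-1/2)·log((a-1/2+x)/(a-1/2))`. -/
lemma claimA {a : ℝ} (ha : 1 ≤ a) {x : ℝ} (hx : 0 ≤ x) :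
    (Real.log (a+x) - Real.log a) - x/(a+x) ≤
      (a+1/2) * (Real.log (a+1/2+x) - Real.log (a+1/2))
        - (a-1/2) * (Real.log (a-1/2+x) - Real.log (a-1/2)) := by
  set W : ℝ → ℝ := fun y =>
    (a+1/2) * (Real.log (a+1/2+y) - Real.log (a+1/2))
      - (a-1/2) * (Real.log (a-1/2+y) - Real.log (a-1/2))
      - (Real.log (a+y) - Real.log a) + y/(a+y) with hW
  have ha2 : (0:ℝ) < a - 1/2 := by linarith
  have hderiv : ∀ y ∈ Set.Ici (0:ℝ), HasDerivAt W
      ((a+1/2) * (1/(a+1/2+y)) - (a-1/2) * (1/(a-1/2+y)) - 1/(a+y) + a/(a+y)^2) y := by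
    intro y hy
    have hy0 : (0:ℝ) ≤ y := hy
    have h1 : a + 1/2 + y ≠ 0 := by positivity
    have h2 : a - 1/2 + y ≠ 0 := by positivity
    have h3 : a + y ≠ 0 := by positivity
    have d1 : HasDerivAt (fun y : ℝ => Real.log (a+1/2+y) - Real.log (a+1/2)) (1/(a+1/2+y)) y := by
      simpa using (((hasDerivAt_id y).const_add (a+1/2)).log h1).sub_const (Real.log (a+1/2))
    have d2 : HasDerivAt (fun y : ℝ => Real.log (a-1/2+y) - Real.log (a-1/2)) (1/(a-1/2+y)) y := by
      simpa using (((hasDerivAt_id y).const_add (a-1/2)).log h2).sub_const (Real.log (a-1/2))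
    have d3 : HasDerivAt (fun y : ℝ => Real.log (a+y) - Real.log a) (1/(a+y)) y := by
      simpa using (((hasDerivAt_id y).const_add a).log h3).sub_const (Real.log a)
    have d4 : HasDerivAt (fun y : ℝ => y/(a+y)) (a/(a+y)^2) y := by
      have := (hasDerivAt_id y).fun_div ((hasDerivAt_id y).const_add a) h3
      refine this.congr_deriv ?_
      simp only [id]
      field_simp
      ring
    exact (((d1.const_mul (a+1/2)).sub (d2.const_mul (a-1/2))).sub d3).add d4
  have key : MonotoneOn W (Set.Ici (0:ℝ)) := by
    apply monotoneOn_of_deriv_nonneg (convex_Ici 0)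
    · exact fun y hy => (hderiv y hy).continuousAt.continuousWithinAt
    · intro y hy
      rw [interior_Ici] at hy
      exact (hderiv y (Set.mem_Ici.mpr (le_of_lt hy))).differentiableAt.differentiableWithinAt
    · intro y hy
      rw [interior_Ici] at hy
      have hy0 : (0:ℝ) < y := hy
      rw [(hderiv y hy0.le).deriv]
      have h1 : (0:ℝ) < a + 1/2 + y := by positivity
      have h2 : (0:ℝ) < a - 1/2 + y := by positivity
      have h3 : (0:ℝ) < a + y := by positivity
      have e1 : (a+1/2) * (1/(a+1/2+y)) - (a-1/2) * (1/(a-1/2+y))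
          = y / ((a+1/2+y) * (a-1/2+y)) := by
        rw [mul_one_div, mul_one_div, div_sub_div _ _ (by positivity) (by positivity),
          div_eq_div_iff (by positivity) (by positivity)]
        ring
      have e2 : (1:ℝ)/(a+y) - a/(a+y)^2 = y/(a+y)^2 := by
        rw [div_sub_div _ _ (by positivity) (by positivity), div_eq_div_iff (by positivity) (by positivity)]
        ring
      have hd : (a+1/2+y) * (a-1/2+y) ≤ (a+y)^2 := by nlinarith
      have e3 : y/(a+y)^2 ≤ y / ((a+1/2+y) * (a-1/2+y)) := by
        gcongr <;> first | positivity | nlinarith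
      linarith
  have h0 : W 0 = 0 := by simp [hW]
  have := key (Set.self_mem_Ici) (Set.mem_Ici.mpr hx) hx
  rw [h0] at this
  simp only [hW] at this
  linarith
/-- KEY inequality: partial sums of `log(1+x/k) - x/(k+x)` are bounded by `x²/(1+x)`. -/
lemma keyIneq {x : ℝ} (hx : 0 ≤ x) (M : ℕ) :
    ∑ k ∈ Finset.range M,
        (Real.log ((k:ℝ)+1+x) - Real.log ((k:ℝ)+1) - x/((k:ℝ)+1+x)) ≤ x^2/(1+x) := by
  set G : ℕ → ℝ := fun k =>
    x - (((k:ℝ)+1/2) * (Real.log ((k:ℝ)+1/2+x) - Real.log ((k:ℝ)+1/2))) with hG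
  have hterm : ∀ k ∈ Finset.range M,
      Real.log ((k:ℝ)+1+x) - Real.log ((k:ℝ)+1) - x/((k:ℝ)+1+x) ≤ G k - G (k+1) := by
    intro k _
    have h := claimA (a := (k:ℝ)+1) (by simp) hx
    have e1 : (k:ℝ)+1+1/2 = ((k+1:ℕ):ℝ)+1/2 := by push_cast; ring
    have e2 : (k:ℝ)+1-1/2 = (k:ℝ)+1/2 := by ring
    rw [e2] at h
    simp only [hG]
    push_cast
    push_cast at h
    linarith
  have hsum := Finset.sum_le_sum hterm
  rw [Finset.sum_range_sub' G M] at hsum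
  have hGM : 0 ≤ G M := by
    simp only [hG]
    have hb : (0:ℝ) < (M:ℝ)+1/2 := by positivity
    have hlog : Real.log ((M:ℝ)+1/2+x) - Real.log ((M:ℝ)+1/2) ≤ x/((M:ℝ)+1/2) := by
      rw [← Real.log_div (by positivity) (by positivity)]
      have h1 : ((M:ℝ)+1/2+x)/((M:ℝ)+1/2) - 1 = x/((M:ℝ)+1/2) := by
        field_simp
        ring
      calc Real.log (((M:ℝ)+1/2+x)/((M:ℝ)+1/2)) ≤ ((M:ℝ)+1/2+x)/((M:ℝ)+1/2) - 1 :=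
            Real.log_le_sub_one_of_pos (by positivity)
        _ = x/((M:ℝ)+1/2) := h1
    have := mul_le_mul_of_nonneg_left hlog hb.le
    rw [mul_div_cancel₀] at this
    · linarith
    · exact hb.ne'
  have hG0 : G 0 = x - (1/2) * Real.log (1+2*x) := by
    simp only [hG]
    norm_num
    congr 2
    rw [← Real.log_div (by positivity) (by norm_num)]
    congr 1
    field_simp
  calc ∑ k ∈ Finset.range M,
        (Real.log ((k:ℝ)+1+x) - Real.log ((k:ℝ)+1) - x/((k:ℝ)+1+x))
      ≤ G 0 - G M := hsum
    _ ≤ G 0 := by linarith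
    _ = x - (1/2) * Real.log (1+2*x) := hG0
    _ ≤ x^2/(1+x) := claimB hx

/-- The log of Euler's Gamma-sequence approximant. -/
noncomputable def ellfun (m : ℕ) (x : ℝ) : ℝ :=
  (1+x) * Real.log m + Real.log (Nat.factorial m) - ∑ k ∈ Finset.range (m+1), Real.log ((k:ℝ)+1+x)

lemma log_gammaSeq {m : ℕ} (hm : 1 ≤ m) {x : ℝ} (hx : 0 < x) :
    Real.log (Real.GammaSeq (1+x) m) = ellfun m x := by
  have hm0 : (0:ℝ) < m := by exact_mod_cast hm
  have hprodpos : ∀ j ∈ Finset.range (m+1), (0:ℝ) < 1 + x + (j:ℝ) := by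
    intro j _; positivity
  have hprod : (0:ℝ) < ∏ j ∈ Finset.range (m+1), (1 + x + (j:ℝ)) :=
    Finset.prod_pos hprodpos
  have hfac : (0:ℝ) < (Nat.factorial m : ℝ) := by exact_mod_cast (Nat.factorial_pos m)
  have hnum : (0:ℝ) < (m:ℝ) ^ (1+x : ℝ) * (Nat.factorial m : ℝ) := by positivity
  rw [Real.GammaSeq, Real.log_div hnum.ne' hprod.ne', Real.log_mul (by positivity) hfac.ne',
    Real.log_rpow hm0, Real.log_prod (fun j hj => (hprodpos j hj).ne')]
  simp only [ellfun]
  congr 1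
  apply Finset.sum_congr rfl
  intro k _
  congr 1
  ring

lemma hasDerivAt_ellfun (m : ℕ) {x : ℝ} (hx : 0 < x) :
    HasDerivAt (fun y => ellfun m y)
      (Real.log m - ∑ k ∈ Finset.range (m+1), 1/((k:ℝ)+1+x)) x := by
  have d1 : HasDerivAt (fun y : ℝ => (1+y) * Real.log m) (Real.log m) x := by
    simpa using ((hasDerivAt_id x).const_add 1).mul_const (Real.log m)
  have d2 : HasDerivAt (fun y : ℝ => ∑ k ∈ Finset.range (m+1), Real.log ((k:ℝ)+1+y))
      (∑ k ∈ Finset.range (m+1), 1/((k:ℝ)+1+x)) x := by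
    apply HasDerivAt.fun_sum
    intro k _
    simpa using (((hasDerivAt_id x).const_add ((k:ℝ)+1)).log (by positivity))
  simpa [ellfun.eq_def] using (d1.add_const (Real.log (Nat.factorial m))).fun_sub d2

/-- The perturbed sequence-level function, antitone on `(0,∞)`. -/
noncomputable def Rfun (m : ℕ) (x : ℝ) : ℝ :=
  (ellfun m x + (Real.log (m+1) - Real.log m)) / x - Real.log (1+x)

lemma sum_log_cast (m : ℕ) :
    ∑ k ∈ Finset.range (m+1), Real.log ((k:ℝ)+1)
      = Real.log ((m:ℝ)+1) + Real.log (Nat.factorial m) := by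
  rw [← Real.log_prod (fun k _ => by positivity)]
  have : (∏ k ∈ Finset.range (m+1), ((k:ℝ)+1)) = ((Nat.factorial (m+1) : ℕ) : ℝ) := by
    rw [← Finset.prod_range_add_one_eq_factorial]
    push_cast
    rfl
  rw [this, Nat.factorial_succ]
  push_cast
  rw [Real.log_mul (by positivity) (by exact_mod_cast (Nat.factorial_pos m).ne')]

lemma Rfun_antitoneOn (m : ℕ) (hm : 1 ≤ m) : AntitoneOn (Rfun m) (Set.Ioi (0:ℝ)) := by
  have hm0 : (0:ℝ) < m := by exact_mod_cast hm
  have hderiv : ∀ x ∈ Set.Ioi (0:ℝ), HasDerivAt (Rfun m)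
      (((Real.log m - ∑ k ∈ Finset.range (m+1), 1/((k:ℝ)+1+x)) * x
        - (ellfun m x + (Real.log (m+1) - Real.log m)) * 1) / x^2 - 1/(1+x)) x := by
    intro x hx
    have hx0 : (0:ℝ) < x := hx
    have d1 := ((hasDerivAt_ellfun m hx0).add_const
        (Real.log (m+1) - Real.log m)).fun_div (hasDerivAt_id x) hx0.ne'
    have d2 : HasDerivAt (fun y : ℝ => Real.log (1+y)) (1/(1+x)) x := by
      simpa using ((hasDerivAt_id x).const_add 1).log (by positivity)
    unfold Rfun
    simpa using d1.fun_sub d2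
  apply antitoneOn_of_deriv_nonpos (convex_Ioi 0)
  · exact fun x hx => (hderiv x hx).continuousAt.continuousWithinAt
  · intro x hx
    rw [interior_Ioi] at hx
    exact (hderiv x hx).differentiableAt.differentiableWithinAt
  · intro x hx
    rw [interior_Ioi] at hx
    have hx0 : (0:ℝ) < x := hx
    rw [(hderiv x hx0).deriv]
    have hiden : (Real.log m - ∑ k ∈ Finset.range (m+1), 1/((k:ℝ)+1+x)) * x
        - (ellfun m x + (Real.log (m+1) - Real.log m)) * 1
        = ∑ k ∈ Finset.range (m+1),
            (Real.log ((k:ℝ)+1+x) - Real.log ((k:ℝ)+1) - x/((k:ℝ)+1+x)) := by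
      have hsplit : ∑ k ∈ Finset.range (m+1),
            (Real.log ((k:ℝ)+1+x) - Real.log ((k:ℝ)+1) - x/((k:ℝ)+1+x))
          = (∑ k ∈ Finset.range (m+1), Real.log ((k:ℝ)+1+x))
            - (∑ k ∈ Finset.range (m+1), Real.log ((k:ℝ)+1))
            - (∑ k ∈ Finset.range (m+1), x/((k:ℝ)+1+x)) := by
        rw [← Finset.sum_sub_distrib, ← Finset.sum_sub_distrib]
      have hxdiv : ∑ k ∈ Finset.range (m+1), x/((k:ℝ)+1+x)
          = x * ∑ k ∈ Finset.range (m+1), 1/((k:ℝ)+1+x) := by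
        rw [Finset.mul_sum]
        apply Finset.sum_congr rfl
        intro k _
        rw [mul_one_div]
      rw [hsplit, hxdiv, sum_log_cast m]
      simp only [ellfun, mul_one]
      ring
    rw [hiden]
    have hkey := keyIneq hx0.le (m+1)
    have h2 : (∑ k ∈ Finset.range (m+1),
        (Real.log ((k:ℝ)+1+x) - Real.log ((k:ℝ)+1) - x/((k:ℝ)+1+x))) / x^2
        ≤ (x^2/(1+x)) / x^2 := by gcongr
    have h3 : (x^2/(1+x)) / x^2 = 1/(1+x) := by
      rw [div_div, div_eq_div_iff (by positivity) (by positivity)]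
      ring
    linarith [h2, h3.le]
noncomputable def gfun (x : ℝ) : ℝ :=
  Real.log (Real.Gamma (1+x)) / x - Real.log (1+x)

lemma tendsto_ellfun {x : ℝ} (hx : 0 < x) :
    Filter.Tendsto (fun m : ℕ => ellfun m x) Filter.atTop
      (nhds (Real.log (Real.Gamma (1+x)))) := by
  have h1 : (0:ℝ) < Real.Gamma (1+x) := Real.Gamma_pos_of_pos (by linarith)
  have h2 := (Real.GammaSeq_tendsto_Gamma (1+x)).log h1.ne'
  apply h2.congr'
  filter_upwards [Filter.eventually_ge_atTop 1] with m hm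
  exact log_gammaSeq hm hx

lemma tendsto_eps :
    Filter.Tendsto (fun m : ℕ => Real.log ((m:ℝ)+1) - Real.log m) Filter.atTop (nhds 0) := by
  have h1 : Filter.Tendsto (fun m : ℕ => 1 + 1/(m:ℝ)) Filter.atTop (nhds 1) := by
    simpa using (tendsto_const_div_atTop_nhds_zero_nat (1:ℝ)).const_add 1
  have h2 := h1.log one_ne_zero
  rw [Real.log_one] at h2
  apply h2.congr'
  filter_upwards [Filter.eventually_ge_atTop 1] with m hm
  have hm0 : (0:ℝ) < m := by exact_mod_cast hm
  rw [show (1:ℝ) + 1/(m:ℝ) = ((m:ℝ)+1)/m by field_simp,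
    Real.log_div (by positivity) hm0.ne']

lemma gfun_anti {x y : ℝ} (hx : 0 < x) (hxy : x ≤ y) : gfun y ≤ gfun x := by
  have hy : (0:ℝ) < y := lt_of_lt_of_le hx hxy
  have hineq : ∀ m : ℕ, 1 ≤ m →
      ellfun m y / y - Real.log (1+y) ≤
        ellfun m x / x - Real.log (1+x) + (Real.log ((m:ℝ)+1) - Real.log m)/x := by
    intro m hm
    have hm0 : (0:ℝ) < m := by exact_mod_cast hm
    have hR := Rfun_antitoneOn m hm (Set.mem_Ioi.mpr hx) (Set.mem_Ioi.mpr hy) hxy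
    have heps : 0 ≤ Real.log ((m:ℝ)+1) - Real.log m := by
      have := Real.log_le_log hm0 (by linarith : (m:ℝ) ≤ (m:ℝ)+1)
      linarith
    have h1 : ellfun m y / y - Real.log (1+y) ≤ Rfun m y := by
      rw [Rfun, add_div]
      have : 0 ≤ (Real.log ((m:ℝ)+1) - Real.log m)/y := by positivity
      linarith
    have h2 : Rfun m x =
        ellfun m x / x - Real.log (1+x) + (Real.log ((m:ℝ)+1) - Real.log m)/x := by
      rw [Rfun, add_div]
      ring
    rw [h2] at hR
    exact le_trans h1 hR
  have hLy : Filter.Tendsto (fun m : ℕ => ellfun m y / y - Real.log (1+y))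
      Filter.atTop (nhds (gfun y)) :=
    ((tendsto_ellfun hy).div_const y).sub_const _
  have hLx : Filter.Tendsto
      (fun m : ℕ => ellfun m x / x - Real.log (1+x) + (Real.log ((m:ℝ)+1) - Real.log m)/x)
      Filter.atTop (nhds (gfun x)) := by
    have := (((tendsto_ellfun hx).div_const x).sub_const (Real.log (1+x))).add
      (tendsto_eps.div_const x)
    simpa [gfun] using this
  refine le_of_tendsto_of_tendsto hLy hLx ?_
  filter_upwards [Filter.eventually_ge_atTop 1] with m hm
  exact hineq m hm

lemma cRenyi_eq {d : ℕ} (hd : 1 ≤ d) : cRenyi d = Real.exp (gfun ((d:ℝ)/2)) := by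
  have hd0 : (0:ℝ) < d := by exact_mod_cast hd
  have h1 : (0:ℝ) < 1 + (d:ℝ)/2 := by positivity
  have hG : (0:ℝ) < Real.Gamma (1 + (d:ℝ)/2) := Real.Gamma_pos_of_pos h1
  rw [cRenyi, gfun, Real.exp_sub, Real.exp_log h1, Real.rpow_def_of_pos hG]
  congr 2
  field_simp

lemma cRenyi_even {m : ℕ} (hm : 1 ≤ m) :
    cRenyi (2*m) = Real.exp (Real.log (Nat.factorial m) / m - Real.log ((m:ℝ)+1)) := by
  have hm0 : (0:ℝ) < m := by exact_mod_cast hm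
  have hcast : (1 + ((2*m : ℕ):ℝ)/2) = (m:ℝ)+1 := by push_cast; ring
  have hfac : (0:ℝ) < (Nat.factorial m : ℝ) := by exact_mod_cast (Nat.factorial_pos m)
  have hG : Real.Gamma ((m:ℝ)+1) = (Nat.factorial m : ℝ) := by
    exact_mod_cast Real.Gamma_nat_eq_factorial m
  have hexp : ((2:ℝ)/((2*m:ℕ):ℝ)) = 1/(m:ℝ) := by
    push_cast
    rw [div_eq_div_iff (by positivity) hm0.ne']
    ring
  rw [cRenyi, hcast, hG, hexp, Real.rpow_def_of_pos hfac, Real.exp_sub,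
    Real.exp_log (by positivity : (0:ℝ) < (m:ℝ)+1)]
  congr 2
  ring

lemma tendsto_logfac :
    Filter.Tendsto (fun m : ℕ => Real.log (Nat.factorial m) / m - Real.log ((m:ℝ)+1))
      Filter.atTop (nhds (-1)) := by
  set u : ℕ → ℝ := fun i => 1 - ((i:ℝ)+1) * Real.log (1 + 1/((i:ℝ)+1)) with hu
  have hu0 : Filter.Tendsto u Filter.atTop (nhds 0) := by
    have h1 : Filter.Tendsto (fun i : ℕ => ((i:ℝ)+1)) Filter.atTop Filter.atTop :=
      Filter.tendsto_atTop_add_const_right _ 1 tendsto_natCast_atTop_atTop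
    have h2 := (Real.tendsto_mul_log_one_add_div_atTop 1).comp h1
    have h3 : Filter.Tendsto (fun i : ℕ => ((i:ℝ)+1) * Real.log (1 + 1/((i:ℝ)+1)))
        Filter.atTop (nhds 1) := h2
    have h4 := ((tendsto_const_nhds : Filter.Tendsto (fun _ : ℕ => (1:ℝ)) Filter.atTop (nhds 1)).sub h3)
    simpa [hu] using h4
  have hsum : ∀ n : ℕ, ∑ i ∈ Finset.range n, u i
      = Real.log (Nat.factorial n) - n * Real.log ((n:ℝ)+1) + n := by
    intro n
    induction n with
    | zero => simp [Nat.factorial]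
    | succ n ih =>
      rw [Finset.sum_range_succ, ih]
      have hlog1 : Real.log (1 + 1/((n:ℝ)+1)) = Real.log ((n:ℝ)+2) - Real.log ((n:ℝ)+1) := by
        rw [show (1:ℝ) + 1/((n:ℝ)+1) = ((n:ℝ)+2)/((n:ℝ)+1) by field_simp; ring,
          Real.log_div (by positivity) (by positivity)]
      have hlogfac : Real.log (Nat.factorial (n+1))
          = Real.log ((n:ℝ)+1) + Real.log (Nat.factorial n) := by
        rw [Nat.factorial_succ]
        push_cast
        rw [Real.log_mul (by positivity) (by exact_mod_cast (Nat.factorial_pos n).ne')]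
      simp only [hu]
      rw [hlog1, hlogfac]
      push_cast
      ring
  have hces := hu0.cesaro
  have hmain : Filter.Tendsto
      (fun n : ℕ => Real.log (Nat.factorial n)/n - Real.log ((n:ℝ)+1) + 1)
      Filter.atTop (nhds 0) := by
    apply hces.congr'
    filter_upwards [Filter.eventually_ge_atTop 1] with n hn
    have hn0 : (0:ℝ) < n := by exact_mod_cast hn
    rw [hsum n]
    field_simp
  have := hmain.sub_const 1
  simpa using this
lemma cRenyi_mono : ∀ d₁ d₂ : ℕ, 1 ≤ d₁ → d₁ ≤ d₂ → cRenyi d₂ ≤ cRenyi d₁ := by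
  intro d₁ d₂ h1 h12
  rw [cRenyi_eq h1, cRenyi_eq (le_trans h1 h12)]
  apply Real.exp_le_exp.mpr
  have hd1 : (0:ℝ) < (d₁:ℝ)/2 := by
    have : (0:ℝ) < (d₁:ℝ) := by exact_mod_cast h1
    positivity
  have hd12 : (d₁:ℝ)/2 ≤ (d₂:ℝ)/2 := by
    have : (d₁:ℝ) ≤ (d₂:ℝ) := by exact_mod_cast h12
    linarith
  exact gfun_anti hd1 hd12

lemma cRenyi_sub : Filter.Tendsto (fun n : ℕ => cRenyi (2*(n+1))) Filter.atTop
    (nhds (Real.exp (-1))) := by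
  have h := tendsto_logfac.comp (tendsto_add_atTop_nat 1)
  have h2 := (Real.continuous_exp.tendsto (-1)).comp h
  apply h2.congr
  intro n
  rw [cRenyi_even (Nat.le_add_left 1 n)]
  rfl


end RenyiAux

/-- the sequence `(c_d)_{d ≥ 1}` is nonincreasing, converges to `1/e`, and in
particular is bounded below by `1/e`. -/
theorem stmt19 :
    (∀ d₁ d₂ : ℕ, 1 ≤ d₁ → d₁ ≤ d₂ → cRenyi d₂ ≤ cRenyi d₁) ∧
    Filter.Tendsto (fun d : ℕ => cRenyi d) Filter.atTop (nhds (1 / Real.exp 1)) ∧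
    (∀ d : ℕ, 1 ≤ d → 1 / Real.exp 1 ≤ cRenyi d) := by
  have hexp : (1:ℝ) / Real.exp 1 = Real.exp (-1) := by
    rw [Real.exp_neg, one_div]
  set seq : ℕ → ℝ := fun n => cRenyi (n+1) with hseq
  have hanti : Antitone seq := by
    intro a b hab
    exact cRenyi_mono (a+1) (b+1) (Nat.le_add_left 1 a) (by omega)
  have hidx : Filter.Tendsto (fun n : ℕ => 2*n+1) Filter.atTop Filter.atTop := by
    apply StrictMono.tendsto_atTop
    intro a b hab
    show 2*a+1 < 2*b+1
    omega
  have hsub' : Filter.Tendsto (fun n : ℕ => seq (2*n+1)) Filter.atTop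
      (nhds (Real.exp (-1))) := by
    apply cRenyi_sub.congr
    intro n
    simp only [hseq]
    congr 1
  rcases tendsto_of_antitone hanti with h | ⟨l, hl⟩
  · exact absurd hsub' (not_tendsto_nhds_of_tendsto_atBot (h.comp hidx) _)
  · have hl2 : Filter.Tendsto (fun n : ℕ => seq (2*n+1)) Filter.atTop (nhds l) :=
      hl.comp hidx
    have hle : l = Real.exp (-1) := tendsto_nhds_unique hl2 hsub'
    subst hle
    have htend : Filter.Tendsto (fun d : ℕ => cRenyi d) Filter.atTop
        (nhds (Real.exp (-1))) := (Filter.tendsto_add_atTop_iff_nat 1).mp hl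
    refine ⟨cRenyi_mono, by rwa [hexp], ?_⟩
    intro d hd
    rw [hexp]
    have := hanti.le_of_tendsto hl (d-1)
    simpa only [hseq, Nat.sub_add_cancel hd] using this
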